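/- (Theorem 2.1, d = 2, annulus version) Let n ≥ 1, r > 0, 0 ≤ α ≤ β with β ≥ r, and let F, G : ℤ² → GL(n,ℂ) satisfy F(y) = G(y) = I for all y ∉ B_r ∩ ℤ². If S(F)(γ_z) = S(G)(γ_z) for every z ∈ ℤ² with α ≤ |z| ≤ β, then F(z) = G(z) for every z ∈ ℤ² with α ≤ |z| ≤ β. -/

import Mathlib

noncomputable section

open Matrix

/-- Embedding of the lattice `ℤ^d` into Euclidean `ℝ^d`. -/
def emb {d : ℕ} (z : Fin d → ℤ) : EuclideanSpace ℝ (Fin d) := WithLp.toLp 2 (fun i => (z i : ℝ))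

/- Ordered product of `Φ` over `supp`: the factors are multiplied so that larger values
of `key` contribute factors further to the left (the value is `1` if no strictly
`key`-decreasing enumeration of `supp` by a list exists). -/
open Classical in
noncomputable def oprodBy {α G : Type*} [Monoid G] (Φ : α → G) (key : α → ℝ) (supp : Set α) : G :=
  if h : ∃ l : List α, l.Pairwise (fun a b => key b < key a) ∧ ∀ a, a ∈ l ↔ a ∈ supp
  then (h.choose.map Φ).prod else 1

/-- The discrete non-abelian X-ray transform of `F` along the oriented line through `x`
with direction `θ`: the ordered product of `F y` over lattice points `y` on the line,
the point furthest along the orientation contributing the leftmost factor. -/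
noncomputable def discS {d : ℕ} {G : Type*} [Monoid G] (F : (Fin d → ℤ) → G)
    (x θ : EuclideanSpace ℝ (Fin d)) : G :=
  oprodBy F (fun z => ∑ i, ((z i : ℝ) - x i) * θ i)
    {z | (∃ t : ℝ, emb z = x + t • θ) ∧ F z ≠ 1}
/-- The direction of the rational ray γ_z in ℝ²: for z ≠ 0 it is (−z₂, z₁)/|z|, and for
z = 0 it is a fixed rational direction θ₀. -/
def rayDir (θ₀ : EuclideanSpace ℝ (Fin 2)) (z : Fin 2 → ℤ) : EuclideanSpace ℝ (Fin 2) :=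
  if z = 0 then θ₀ else ‖emb z‖⁻¹ • emb ![-(z 1), z 0]

namespace Stmt7Aux

lemma emb_injective {d : ℕ} : Function.Injective (@emb d) := by
  intro a b h
  funext i
  have h2 : ((a i : ℝ)) = ((b i : ℝ)) := congrArg (fun v : EuclideanSpace ℝ (Fin d) => v i) h
  exact_mod_cast h2

lemma emb_apply {d : ℕ} (z : Fin d → ℤ) (i : Fin d) : emb z i = (z i : ℝ) := rfl

lemma normsq (x : EuclideanSpace ℝ (Fin 2)) : ‖x‖ ^ 2 = x 0 ^ 2 + x 1 ^ 2 := by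
  rw [EuclideanSpace.norm_eq]
  rw [Real.sq_sqrt (by positivity)]
  simp [Fin.sum_univ_two, sq_abs]

lemma abs_coord_le_norm (x : EuclideanSpace ℝ (Fin 2)) (i : Fin 2) : |x i| ≤ ‖x‖ := by
  have h1 : x i ^ 2 ≤ ∑ j, x j ^ 2 :=
    Finset.single_le_sum (f := fun j => x j ^ 2) (fun j _ => sq_nonneg _) (Finset.mem_univ i)
  calc |x i| = Real.sqrt (x i ^ 2) := (Real.sqrt_sq_eq_abs _).symm
    _ ≤ Real.sqrt (∑ j, x j ^ 2) := Real.sqrt_le_sqrt h1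
    _ = ‖x‖ := by rw [EuclideanSpace.norm_eq]; congr 1; simp [Real.norm_eq_abs, sq_abs]

/-- Lattice points in a ball form a finite set. -/
lemma finite_ball (R : ℝ) : {y : Fin 2 → ℤ | ‖emb y‖ ≤ R}.Finite := by
  have hsub : {y : Fin 2 → ℤ | ‖emb y‖ ≤ R} ⊆
      Set.pi Set.univ (fun _ : Fin 2 => Set.Icc (-⌈R⌉) ⌈R⌉) := by
    intro y hy i _
    have h1 : |(y i : ℝ)| ≤ R := (abs_coord_le_norm (emb y) i).trans hy
    have h2 : (y i : ℝ) ≤ R := (le_abs_self _).trans h1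
    have h3 : -R ≤ (y i : ℝ) := neg_le_of_abs_le h1
    constructor
    · have : (-⌈R⌉ : ℝ) ≤ (y i : ℝ) := by
        push_cast
        exact le_trans (neg_le_neg (Int.le_ceil R)) h3
      exact_mod_cast this
    · have : (y i : ℝ) ≤ (⌈R⌉ : ℝ) := h2.trans (Int.le_ceil R)
      exact_mod_cast this
  exact (Set.Finite.pi (fun _ => Set.finite_Icc _ _)).subset hsub

/-- The value of `oprodBy` given any admissible enumerating list. -/
lemma oprodBy_eq {α G : Type*} [Monoid G] (Φ : α → G) (key : α → ℝ) (supp : Set α)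
    (l : List α) (hl : l.Pairwise (fun a b => key b < key a))
    (hm : ∀ a, a ∈ l ↔ a ∈ supp) :
    oprodBy Φ key supp = (l.map Φ).prod := by
  have hex : ∃ l' : List α, l'.Pairwise (fun a b => key b < key a) ∧
      ∀ a, a ∈ l' ↔ a ∈ supp := ⟨l, hl, hm⟩
  rw [oprodBy, dif_pos hex]
  obtain ⟨hl', hm'⟩ := hex.choose_spec
  haveI : IsAntisymm α (fun a b => key b < key a) :=
    ⟨fun a b h1 h2 => absurd h2 (lt_asymm h1)⟩
  have nd1 : hex.choose.Nodup :=
    hl'.imp (fun {a b} h => fun e => by subst e; exact lt_irrefl _ h)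
  have nd2 : l.Nodup := hl.imp (fun {a b} h => fun e => by subst e; exact lt_irrefl _ h)
  have hperm : hex.choose.Perm l :=
    (List.perm_ext_iff_of_nodup nd1 nd2).2 (fun a => (hm' a).trans (hm a).symm)
  have : hex.choose = l := List.Perm.eq_of_pairwise (fun a b _ _ h1 h2 => absurd h2 (lt_asymm h1)) hl' hl hperm
  rw [this]

/-- Dropping factors equal to `1` does not change a list product. -/
lemma prod_filter_map {α G : Type*} [Monoid G] (Φ : α → G) (p : α → Prop) [DecidablePred p]
    (l : List α) (h : ∀ a ∈ l, ¬ p a → Φ a = 1) :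
    ((l.filter (fun a => p a)).map Φ).prod = (l.map Φ).prod := by
  induction l with
  | nil => simp
  | cons a l ih =>
    have ih' := ih (fun b hb hpb => h b (List.mem_cons_of_mem _ hb) hpb)
    by_cases hp : p a
    · simp [List.filter_cons, hp, ih']
    · simp [List.filter_cons, hp, ih', h a List.mem_cons_self hp]

/-- A finset on which `key` is injective has a strictly `key`-decreasing enumeration. -/
lemma exists_sorted_list {α : Type*} (key : α → ℝ) (t : Finset α)
    (hinj : ∀ a ∈ t, ∀ b ∈ t, key a = key b → a = b) :
    ∃ l : List α, l.Pairwise (fun a b => key b < key a) ∧ ∀ a, a ∈ l ↔ a ∈ t := by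
  classical
  induction t using Finset.strongInductionOn with
  | _ t ih =>
    rcases t.eq_empty_or_nonempty with rfl | ht
    · exact ⟨[], List.Pairwise.nil, by simp⟩
    · obtain ⟨a, ha, hmax⟩ := t.exists_max_image key ht
      obtain ⟨l, hl, hm⟩ := ih (t.erase a) (Finset.erase_ssubset ha)
        (fun x hx y hy hxy => hinj x (Finset.mem_of_mem_erase hx) y
          (Finset.mem_of_mem_erase hy) hxy)
      refine ⟨a :: l, ?_, ?_⟩
      · refine List.Pairwise.cons (fun b hb => ?_) hl
        have hbt : b ∈ t.erase a := (hm b).1 hb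
        have hne : b ≠ a := Finset.ne_of_mem_erase hbt
        have hle : key b ≤ key a := hmax b (Finset.mem_of_mem_erase hbt)
        rcases lt_or_eq_of_le hle with hlt | heq
        · exact hlt
        · exact absurd (hinj b (Finset.mem_of_mem_erase hbt) a ha heq) hne
      · intro b
        simp only [List.mem_cons, hm, Finset.mem_erase]
        constructor
        · rintro (rfl | ⟨_, hb⟩)
          · exact ha
          · exact hb
        · intro hb
          by_cases hba : b = a
          · exact Or.inl hba
          · exact Or.inr ⟨hba, hb⟩

lemma rayDir_ne_zero (θ₀ : EuclideanSpace ℝ (Fin 2))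
    (hθ₀ : ∃ w : Fin 2 → ℤ, w ≠ 0 ∧ θ₀ = ‖emb w‖⁻¹ • emb w) (z : Fin 2 → ℤ) :
    rayDir θ₀ z ≠ 0 := by
  rw [rayDir]
  split_ifs with hz
  · obtain ⟨w, hw, rfl⟩ := hθ₀
    have hwe : emb w ≠ 0 := by
      intro he
      exact hw (emb_injective (he.trans (by ext i; simp [emb])))
    exact smul_ne_zero (inv_ne_zero (norm_ne_zero_iff.2 hwe)) hwe
  · have hze : emb z ≠ 0 := by
      intro he
      exact hz (emb_injective (he.trans (by ext i; simp [emb])))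
    have hv : emb ![-(z 1), z 0] ≠ (0 : EuclideanSpace ℝ (Fin 2)) := by
      intro he
      apply hz
      funext i
      have h0 := congrArg (fun v : EuclideanSpace ℝ (Fin 2) => v 0) he
      have h1 := congrArg (fun v : EuclideanSpace ℝ (Fin 2) => v 1) he
      simp [emb] at h0 h1
      fin_cases i <;> simp [h1, h0] <;> omega
    exact smul_ne_zero (inv_ne_zero (norm_ne_zero_iff.2 hze)) hv

lemma rayDir_orth (θ₀ : EuclideanSpace ℝ (Fin 2)) (z : Fin 2 → ℤ) :
    (z 0 : ℝ) * rayDir θ₀ z 0 + (z 1 : ℝ) * rayDir θ₀ z 1 = 0 := by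
  rw [rayDir]
  split_ifs with hz
  · have h0 : z 0 = 0 := by rw [hz]; rfl
    have h1 : z 1 = 0 := by rw [hz]; rfl
    simp [h0, h1]
  · have e0 : (‖emb z‖⁻¹ • emb ![-(z 1), z 0]) 0 = ‖emb z‖⁻¹ * (-(z 1 : ℝ)) := by
      simp [emb, PiLp.smul_apply]
    have e1 : (‖emb z‖⁻¹ • emb ![-(z 1), z 0]) 1 = ‖emb z‖⁻¹ * (z 0 : ℝ) := by
      simp [emb, PiLp.smul_apply]
    rw [e0, e1]
    ring

end Stmt7Aux

open Stmt7Aux in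
/-- Theorem 2.1, d = 2, annulus version: the discrete non-abelian X-ray
transform on the rational rays γ_z with α ≤ |z| ≤ β (β ≥ r) uniquely determines
F on the annulus α ≤ |z| ≤ β. -/
theorem stmt7 (n : ℕ) (hn : 1 ≤ n) (r α β : ℝ) (hr : 0 < r)
    (hα : 0 ≤ α) (hαβ : α ≤ β) (hβ : r ≤ β)
    (θ₀ : EuclideanSpace ℝ (Fin 2))
    (hθ₀ : ∃ w : Fin 2 → ℤ, w ≠ 0 ∧ θ₀ = ‖emb w‖⁻¹ • emb w)
    (F G : (Fin 2 → ℤ) → GL (Fin n) ℂ)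
    (hF : ∀ y : Fin 2 → ℤ, ¬ ‖emb y‖ ≤ r → F y = 1)
    (hG : ∀ y : Fin 2 → ℤ, ¬ ‖emb y‖ ≤ r → G y = 1)
    (h : ∀ z : Fin 2 → ℤ, α ≤ ‖emb z‖ → ‖emb z‖ ≤ β →
      discS F (emb z) (rayDir θ₀ z) = discS G (emb z) (rayDir θ₀ z)) :
    ∀ z : Fin 2 → ℤ, α ≤ ‖emb z‖ → ‖emb z‖ ≤ β → F z = G z := by
  classical
  -- the measure: number of strictly farther lattice points within the ball of radius r
  have hfin : ∀ z : Fin 2 → ℤ,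
      {y : Fin 2 → ℤ | ‖emb z‖ < ‖emb y‖ ∧ ‖emb y‖ ≤ r}.Finite :=
    fun z => (finite_ball r).subset (fun y hy => hy.2)
  suffices H : ∀ k : ℕ, ∀ z : Fin 2 → ℤ, (hfin z).toFinset.card = k →
      α ≤ ‖emb z‖ → ‖emb z‖ ≤ β → F z = G z by
    exact fun z h1 h2 => H _ z rfl h1 h2
  intro k
  induction k using Nat.strong_induction_on with
  | _ k IH =>
    intro z hk hzα hzβ
    by_cases hzr : ‖emb z‖ ≤ r
    swap
    · rw [hF z hzr, hG z hzr]
    set θ : EuclideanSpace ℝ (Fin 2) := rayDir θ₀ z with hθdef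
    set x : EuclideanSpace ℝ (Fin 2) := emb z with hxdef
    have hθ0 : θ ≠ 0 := rayDir_ne_zero θ₀ hθ₀ z
    have horth : x 0 * θ 0 + x 1 * θ 1 = 0 := rayDir_orth θ₀ z
    have hc : 0 < θ 0 ^ 2 + θ 1 ^ 2 := by
      by_contra hcon
      push_neg at hcon
      have h0 : θ 0 = 0 := by nlinarith [sq_nonneg (θ 0), sq_nonneg (θ 1)]
      have h1 : θ 1 = 0 := by nlinarith [sq_nonneg (θ 0), sq_nonneg (θ 1)]
      exact hθ0 (PiLp.ext (fun i => by fin_cases i <;> simp [h0, h1]))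
    -- key facts about lattice points on the line
    set key : (Fin 2 → ℤ) → ℝ := fun y => ∑ i, ((y i : ℝ) - x i) * θ i with hkeydef
    have hkey : ∀ (y : Fin 2 → ℤ) (t : ℝ), emb y = x + t • θ →
        key y = t * (θ 0 ^ 2 + θ 1 ^ 2) := by
      intro y t hyt
      have h0 : (y 0 : ℝ) - x 0 = t * θ 0 := by
        have := congrArg (fun v : EuclideanSpace ℝ (Fin 2) => v 0) hyt
        simp only [PiLp.add_apply, PiLp.smul_apply, smul_eq_mul, emb_apply] at this
        linarith
      have h1 : (y 1 : ℝ) - x 1 = t * θ 1 := by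
        have := congrArg (fun v : EuclideanSpace ℝ (Fin 2) => v 1) hyt
        simp only [PiLp.add_apply, PiLp.smul_apply, smul_eq_mul, emb_apply] at this
        linarith
      simp only [hkeydef, Fin.sum_univ_two, h0, h1]
      ring
    have hnormsq : ∀ (y : Fin 2 → ℤ) (t : ℝ), emb y = x + t • θ →
        ‖emb y‖ ^ 2 = ‖x‖ ^ 2 + t ^ 2 * (θ 0 ^ 2 + θ 1 ^ 2) := by
      intro y t hyt
      rw [hyt, normsq, normsq]
      simp only [PiLp.add_apply, PiLp.smul_apply, smul_eq_mul]
      linear_combination (2 * t) * horth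
    have hfar : ∀ y : Fin 2 → ℤ, (∃ t : ℝ, emb y = x + t • θ) → y ≠ z →
        ‖x‖ < ‖emb y‖ := by
      rintro y ⟨t, hyt⟩ hyz
      have ht : t ≠ 0 := by
        rintro rfl
        exact hyz (emb_injective (by rw [hyt, hxdef]; simp))
      have hsq := hnormsq y t hyt
      have : ‖x‖ ^ 2 < ‖emb y‖ ^ 2 := by nlinarith [sq_pos_of_ne_zero ht, hc]
      exact lt_of_pow_lt_pow_left₀ 2 (norm_nonneg _) this
    -- the finite set of lattice points on the line within the ball of radius r
    have hTfin : {y : Fin 2 → ℤ | (∃ t : ℝ, emb y = x + t • θ) ∧ ‖emb y‖ ≤ r}.Finite :=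
      (finite_ball r).subset (fun y hy => hy.2)
    set T : Finset (Fin 2 → ℤ) := hTfin.toFinset with hTdef
    have hTmem : ∀ y : Fin 2 → ℤ, y ∈ T ↔
        (∃ t : ℝ, emb y = x + t • θ) ∧ ‖emb y‖ ≤ r := by
      intro y; rw [hTdef, Set.Finite.mem_toFinset]; rfl
    have hinj : ∀ a ∈ T, ∀ b ∈ T, key a = key b → a = b := by
      intro a ha b hb hab
      obtain ⟨⟨s, hs⟩, -⟩ := (hTmem a).1 ha
      obtain ⟨⟨t, ht⟩, -⟩ := (hTmem b).1 hb
      rw [hkey a s hs, hkey b t ht] at hab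
      have hst : s = t := by
        have := mul_right_cancel₀ (ne_of_gt hc) hab
        exact this
      apply emb_injective
      rw [hs, ht, hst]
    obtain ⟨m, hm_pair, hm_mem⟩ := exists_sorted_list key T hinj
    have hm_nodup : m.Nodup :=
      hm_pair.imp (fun {a b} hab => fun e => by subst e; exact lt_irrefl _ hab)
    -- identify each transform with the product over m
    have hprodF : discS F x θ = (m.map F).prod := by
      rw [discS]
      rw [oprodBy_eq F key _ (m.filter (fun y => F y ≠ 1))
        (hm_pair.sublist (List.filter_sublist (l := m)))
        (by
          intro a
          simp only [List.mem_filter, hm_mem, hTmem, Set.mem_setOf_eq, decide_eq_true_eq]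
          constructor
          · rintro ⟨⟨hline, -⟩, hne⟩; exact ⟨hline, hne⟩
          · rintro ⟨hline, hne⟩
            refine ⟨⟨hline, ?_⟩, hne⟩
            by_contra hyr
            exact hne (hF a hyr))]
      exact prod_filter_map F (fun y => F y ≠ 1) m
        (fun a _ hpa => by
          simpa using hpa)
    have hprodG : discS G x θ = (m.map G).prod := by
      rw [discS]
      rw [oprodBy_eq G key _ (m.filter (fun y => G y ≠ 1))
        (hm_pair.sublist (List.filter_sublist (l := m)))
        (by
          intro a
          simp only [List.mem_filter, hm_mem, hTmem, Set.mem_setOf_eq, decide_eq_true_eq]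
          constructor
          · rintro ⟨⟨hline, -⟩, hne⟩; exact ⟨hline, hne⟩
          · rintro ⟨hline, hne⟩
            refine ⟨⟨hline, ?_⟩, hne⟩
            by_contra hyr
            exact hne (hG a hyr))]
      exact prod_filter_map G (fun y => G y ≠ 1) m
        (fun a _ hpa => by
          simpa using hpa)
    have hEq : (m.map F).prod = (m.map G).prod := by
      rw [← hprodF, ← hprodG]
      exact h z hzα hzβ
    -- z is on the list
    have hzT : z ∈ T := (hTmem z).2 ⟨⟨0, by rw [hxdef]; simp⟩, hzr⟩
    have hzm : z ∈ m := (hm_mem z).2 hzT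
    obtain ⟨m₁, m₂, hsplit⟩ := List.append_of_mem hzm
    have hnd : (m₁ ++ z :: m₂).Nodup := hsplit ▸ hm_nodup
    have hzm₁ : z ∉ m₁ := fun hz1 =>
      (List.nodup_append.1 hnd).2.2 z hz1 z List.mem_cons_self rfl
    have hzm₂ : z ∉ m₂ := (List.nodup_cons.1 (List.nodup_append.1 hnd).2.1).1
    -- induction applies to every other element of m
    have hIH : ∀ y ∈ m, y ≠ z → F y = G y := by
      intro y hym hyz
      have hyT := (hm_mem y).1 hym
      obtain ⟨hline, hyr⟩ := (hTmem y).1 hyT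
      have hfar' : ‖x‖ < ‖emb y‖ := hfar y hline hyz
      have hyα : α ≤ ‖emb y‖ := le_trans hzα (le_of_lt hfar')
      have hyβ : ‖emb y‖ ≤ β := le_trans hyr hβ
      have hsub : (hfin y).toFinset ⊂ (hfin z).toFinset := by
        rw [Set.Finite.toFinset_ssubset_toFinset]
        constructor
        · intro w hw
          exact ⟨lt_trans hfar' hw.1, hw.2⟩
        · intro hcon
          exact absurd (hcon ⟨hfar', hyr⟩).1 (lt_irrefl _)
      have hlt : (hfin y).toFinset.card < k := hk ▸ Finset.card_lt_card hsub
      exact IH _ hlt y rfl hyα hyβ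
    have hm₁eq : m₁.map F = m₁.map G := by
      apply List.map_congr_left
      intro a ha
      exact hIH a (hsplit ▸ List.mem_append_left _ ha) (fun e => hzm₁ (e ▸ ha))
    have hm₂eq : m₂.map F = m₂.map G := by
      apply List.map_congr_left
      intro a ha
      exact hIH a (hsplit ▸ List.mem_append_right _ (List.mem_cons_of_mem _ ha))
        (fun e => hzm₂ (e ▸ ha))
    rw [hsplit] at hEq
    simp only [List.map_append, List.map_cons, List.prod_append, List.prod_cons] at hEq
    rw [hm₁eq, hm₂eq] at hEq
    have h1 : F z * (m₂.map G).prod = G z * (m₂.map G).prod :=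
      mul_left_cancel hEq
    exact mul_right_cancel h1
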